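/- Let (C,≤) be a linear order with least element 0 and greatest element 1, equipped with an antitone involution ', and let a ∈ C satisfy a ≤ a' and: every x ∈ C with a ≤ x ≤ a' satisfies x = a or x = a'. Consider the interval subposet ([a,1],≤) and the subset S := {a,a'} of [a,1]. Then the map g : C → P_S([a,1]) defined by g(x) := (a,x') if x ≤ a and g(x) := (x,a) if a < x is a well-defined bijection; both g and its inverse are order-preserving (with respect to ≤ on C and the twist order ⊑ on P_S([a,1])); and g commutes with the involutions, i.e., g(x') = (g(x))' for all x ∈ C, where (u,v)' := (v,u). In particular, C is a representable Kleene poset. -/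

import Mathlib

universe u

/-- `SetLE B C` means every element of `B` is below every element of `C`. -/
def SetLE {α : Type*} [PartialOrder α] (B C : Set α) : Prop := ∀ x ∈ B, ∀ y ∈ C, x ≤ y

/-- `PS S` is the set of pairs `(x,y)` with `L({x,y}) ≤ S ≤ U({x,y})`. -/
def PS {α : Type*} [PartialOrder α] (S : Set α) : Set (α × α) :=
  {p | SetLE (lowerBounds {p.1, p.2}) S ∧ SetLE S (upperBounds {p.1, p.2})}

/-- The twist order on `α × α`. -/
def Tle {α : Type*} [PartialOrder α] (p q : α × α) : Prop := p.1 ≤ q.1 ∧ q.2 ≤ p.2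

/-- The map `g : C → P_{{a,a'}}([a,1])`, `g(x) = (a,x')` if `x ≤ a` and
`g(x) = (x,a)` if `a < x`. -/
def gmap {C : Type u} [LinearOrder C] [OrderTop C] (f : C → C) (a : C) (haf : a ≤ f a)
    (hanti : ∀ x y : C, x ≤ y → f y ≤ f x) :
    C → ↥(Set.Icc a (⊤ : C)) × ↥(Set.Icc a (⊤ : C)) := fun x =>
  if h : x ≤ a then
    (⟨a, Set.mem_Icc.mpr ⟨le_refl a, le_top⟩⟩,
     ⟨f x, Set.mem_Icc.mpr ⟨le_trans haf (hanti x a h), le_top⟩⟩)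
  else
    (⟨x, Set.mem_Icc.mpr ⟨le_of_not_ge h, le_top⟩⟩,
     ⟨a, Set.mem_Icc.mpr ⟨le_refl a, le_top⟩⟩)

/-- The subset `S = {a, a'}` of the interval `[a,1]`. -/
def SI {C : Type u} [LinearOrder C] [OrderTop C] (f : C → C) (a : C) (haf : a ≤ f a) :
    Set ↥(Set.Icc a (⊤ : C)) :=
  {⟨a, Set.mem_Icc.mpr ⟨le_refl a, le_top⟩⟩, ⟨f a, Set.mem_Icc.mpr ⟨haf, le_top⟩⟩}

section Aux
variable {C : Type u} [LinearOrder C] [OrderTop C] (f : C → C) (a : C) (haf : a ≤ f a)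

lemma mem_PS_iff (p : ↥(Set.Icc a (⊤ : C)) × ↥(Set.Icc a (⊤ : C))) :
    p ∈ PS (SI f a haf) ↔
      ((p.1 : C) = a ∨ (p.2 : C) = a) ∧ (f a ≤ (p.1 : C) ∨ f a ≤ (p.2 : C)) := by
  obtain ⟨x, y⟩ := p
  constructor
  · rintro ⟨h1, h2⟩
    constructor
    · rcases le_total x y with h | h
      · left
        have hmem : x ∈ lowerBounds {x, y} := by
          intro w hw; rcases hw with rfl | hw
          · exact le_rfl
          · simp only [Set.mem_singleton_iff] at hw; subst hw; exact h
        have := h1 x hmem ⟨a, Set.mem_Icc.mpr ⟨le_refl a, le_top⟩⟩ (Or.inl rfl)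
        exact le_antisymm this x.2.1
      · right
        have hmem : y ∈ lowerBounds {x, y} := by
          intro w hw; rcases hw with rfl | hw
          · exact h
          · simp only [Set.mem_singleton_iff] at hw; subst hw; exact le_rfl
        have := h1 y hmem ⟨a, Set.mem_Icc.mpr ⟨le_refl a, le_top⟩⟩ (Or.inl rfl)
        exact le_antisymm this y.2.1
    · rcases le_total x y with h | h
      · right
        have hmem : y ∈ upperBounds {x, y} := by
          intro w hw; rcases hw with rfl | hw
          · exact h
          · simp only [Set.mem_singleton_iff] at hw; subst hw; exact le_rfl
        exact h2 ⟨f a, Set.mem_Icc.mpr ⟨haf, le_top⟩⟩ (Or.inr rfl) y hmem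
      · left
        have hmem : x ∈ upperBounds {x, y} := by
          intro w hw; rcases hw with rfl | hw
          · exact le_rfl
          · simp only [Set.mem_singleton_iff] at hw; subst hw; exact h
        exact h2 ⟨f a, Set.mem_Icc.mpr ⟨haf, le_top⟩⟩ (Or.inr rfl) x hmem
  · rintro ⟨h1, h2⟩
    constructor
    · intro z hz s hs
      have hza : (z : C) ≤ a := by
        rcases h1 with h1 | h1
        · calc (z : C) ≤ (x : C) := Subtype.coe_le_coe.mpr (hz (Or.inl rfl))
            _ = a := h1
        · calc (z : C) ≤ (y : C) := Subtype.coe_le_coe.mpr (hz (Or.inr rfl))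
            _ = a := h1
      rcases hs with rfl | hs
      · exact Subtype.coe_le_coe.mp hza
      · simp only [Set.mem_singleton_iff] at hs; subst hs
        exact Subtype.coe_le_coe.mp (le_trans hza haf)
    · intro s hs z hz
      have hfz : f a ≤ (z : C) := by
        rcases h2 with h2 | h2
        · exact le_trans h2 (Subtype.coe_le_coe.mpr (hz (Or.inl rfl)))
        · exact le_trans h2 (Subtype.coe_le_coe.mpr (hz (Or.inr rfl)))
      rcases hs with rfl | hs
      · exact Subtype.coe_le_coe.mp (le_trans haf hfz)
      · simp only [Set.mem_singleton_iff] at hs; subst hs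
        exact Subtype.coe_le_coe.mp hfz

end Aux

lemma fa_le_of_lt {C : Type u} [LinearOrder C] (f : C → C) (a : C)
    (hgap : ∀ x : C, a ≤ x → x ≤ f a → x = a ∨ x = f a)
    {x : C} (h : a < x) : f a ≤ x := by
  by_contra h'
  rcases hgap x h.le (le_of_not_ge h') with rfl | rfl
  · exact lt_irrefl _ h
  · exact h' le_rfl

lemma f_le_f_iff {C : Type u} [LinearOrder C] (f : C → C)
    (hanti : ∀ x y : C, x ≤ y → f y ≤ f x) (hinv : ∀ x : C, f (f x) = x)
    (x y : C) : f y ≤ f x ↔ x ≤ y := by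
  constructor
  · intro h; have := hanti _ _ h; rwa [hinv, hinv] at this
  · exact hanti x y


/-- Let `C` be a bounded chain with an antitone involution `'` and `a ∈ C` with
`a ≤ a'` and no element strictly between `a` and `a'`. Then `g` is a well-defined
bijection from `C` onto `P_{{a,a'}}([a,1])`, it and its inverse are order-preserving,
and it commutes with the involutions. In particular, `C` is a representable
(pseudo-)Kleene poset. -/
theorem stmt11 {C : Type u} [LinearOrder C] [OrderBot C] [OrderTop C] (f : C → C)
    (hanti : ∀ x y : C, x ≤ y → f y ≤ f x) (hinv : ∀ x : C, f (f x) = x)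
    (a : C) (haf : a ≤ f a)
    (hgap : ∀ x : C, a ≤ x → x ≤ f a → x = a ∨ x = f a) :
    (∀ x : C, gmap f a haf hanti x ∈ PS (SI f a haf)) ∧
    Function.Injective (gmap f a haf hanti) ∧
    (∀ p ∈ PS (SI f a haf), ∃ x : C, gmap f a haf hanti x = p) ∧
    (∀ x y : C, x ≤ y ↔ Tle (gmap f a haf hanti x) (gmap f a haf hanti y)) ∧
    (∀ x : C, gmap f a haf hanti (f x) =
      ((gmap f a haf hanti x).2, (gmap f a haf hanti x).1)) ∧
    (∃ (A : Type u) (instA : PartialOrder A) (S : Set A), S.Nonempty ∧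
      ∃ F : A × A → C, Set.BijOn F (@PS A instA S) Set.univ ∧
        (∀ p ∈ @PS A instA S, ∀ q ∈ @PS A instA S, (@Tle A instA p q ↔ F p ≤ F q)) ∧
        (∀ p ∈ @PS A instA S, F (p.2, p.1) = f (F p))) := by
  set g := gmap f a haf hanti with hg
  set Finv : ↥(Set.Icc a (⊤ : C)) × ↥(Set.Icc a (⊤ : C)) → C :=
    fun p => if (p.1 : C) = a then f p.2 else p.1 with hFinv
  -- g x ∈ PS
  have b1 : ∀ x : C, g x ∈ PS (SI f a haf) := by
    intro x
    rw [mem_PS_iff]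
    by_cases h : x ≤ a
    · simp only [hg, gmap]
      rw [dif_pos h]
      exact ⟨Or.inl rfl, Or.inr (hanti x a h)⟩
    · simp only [hg, gmap]
      rw [dif_neg h]
      exact ⟨Or.inr rfl, Or.inl (fa_le_of_lt f a hgap (lt_of_not_ge h))⟩
  -- left inverse
  have hFg : ∀ x : C, Finv (g x) = x := by
    intro x
    by_cases h : x ≤ a
    · simp only [hg, gmap, hFinv]
      rw [dif_pos h]
      simp only [if_pos]
      exact hinv x
    · simp only [hg, gmap, hFinv]
      rw [dif_neg h, if_neg (fun hxa : x = a => h (le_of_eq hxa))]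
  have b2 : Function.Injective g := Function.LeftInverse.injective hFg
  -- right inverse on PS
  have hgF : ∀ p ∈ PS (SI f a haf), g (Finv p) = p := by
    intro p hp
    rw [mem_PS_iff] at hp
    obtain ⟨h1, h2⟩ := hp
    by_cases hx : (p.1 : C) = a
    · have hfy : f a ≤ (p.2 : C) := by
        rcases h2 with h2 | h2
        · have : f a = a := le_antisymm (h2.trans_eq hx) haf
          rw [this]; exact p.2.2.1
        · exact h2
      have hle : f (p.2 : C) ≤ a := by
        have := hanti _ _ hfy
        rwa [hinv] at this
      simp only [hFinv, if_pos hx, hg, gmap]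
      rw [dif_pos hle]
      refine Prod.ext ?_ ?_
      · exact Subtype.ext hx.symm
      · exact Subtype.ext (hinv _)
    · have hy : (p.2 : C) = a := h1.resolve_left hx
      have hlt : a < (p.1 : C) := lt_of_le_of_ne p.1.2.1 (fun e => hx e.symm)
      simp only [hFinv, if_neg hx, hg, gmap]
      rw [dif_neg (not_le.mpr hlt)]
      refine Prod.ext (Subtype.ext rfl) (Subtype.ext hy.symm)
  have b3 : ∀ p ∈ PS (SI f a haf), ∃ x : C, g x = p := fun p hp => ⟨Finv p, hgF p hp⟩
  -- order preserving
  have b4 : ∀ x y : C, x ≤ y ↔ Tle (g x) (g y) := by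
    intro x y
    by_cases hx : x ≤ a <;> by_cases hy : y ≤ a <;>
        simp only [hg, gmap, Tle] <;>
      [rw [dif_pos hx, dif_pos hy]; rw [dif_pos hx, dif_neg hy];
       rw [dif_neg hx, dif_pos hy]; rw [dif_neg hx, dif_neg hy]] <;>
      simp only [Subtype.mk_le_mk]
    · rw [f_le_f_iff f hanti hinv]
      simp
    · constructor
      · intro _
        exact ⟨le_of_lt (lt_of_not_ge hy), le_trans haf (hanti x a hx)⟩
      · intro _
        exact le_trans hx (le_of_lt (lt_of_not_ge hy))
    · constructor
      · intro h; exact absurd (le_trans h hy) hx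
      · rintro ⟨h, -⟩; exact absurd h hx
    · simp
  -- involution
  have b5 : ∀ x : C, g (f x) = ((g x).2, (g x).1) := by
    intro x
    by_cases h : x ≤ a
    · by_cases hf : f x ≤ a
      · have hfa : a ≤ f x := le_trans haf (hanti x a h)
        have hfx : f x = a := le_antisymm hf hfa
        have hxfa : x = f a := by rw [← hinv x, hfx]
        have haa : a = f a := le_antisymm haf (hxfa ▸ h)
        have hxa : x = a := hxfa.trans haa.symm
        simp only [hg, gmap]
        rw [dif_pos hf, dif_pos h]
        refine Prod.ext (Subtype.ext ?_) (Subtype.ext ?_)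
        · exact hfx.symm
        · exact (hinv x).trans hxa
      · simp only [hg, gmap]
        rw [dif_neg hf, dif_pos h]
    · have hfa : f a ≤ x := fa_le_of_lt f a hgap (lt_of_not_ge h)
      have hfx : f x ≤ a := by
        have := hanti _ _ hfa
        rwa [hinv] at this
      simp only [hg, gmap]
      rw [dif_pos hfx, dif_neg h]
      exact Prod.ext (Subtype.ext rfl) (Subtype.ext (hinv x))
  refine ⟨b1, b2, b3, b4, b5,
    ↥(Set.Icc a (⊤ : C)), inferInstance, SI f a haf,
    ⟨⟨a, Set.mem_Icc.mpr ⟨le_refl a, le_top⟩⟩, Or.inl rfl⟩, Finv, ?_, ?_, ?_⟩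
  · refine ⟨fun _ _ => trivial, ?_, ?_⟩
    · intro p hp q hq he
      rw [← hgF p hp, ← hgF q hq, he]
    · intro c _
      exact ⟨g c, b1 c, hFg c⟩
  · intro p hp q hq
    rw [← hgF p hp, ← hgF q hq, hFg, hFg]
    exact (b4 (Finv p) (Finv q)).symm
  · intro p hp
    have h5 := b5 (Finv p)
    rw [hgF p hp] at h5
    rw [← h5, hFg]
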